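/- Let M and N be monoids, let A be a finitely presented right M-act, and let B be a finitely presented right N-act. Suppose at least one of the following holds: (1) A is a one-element M-act; (2) N is a trivial (one-element) monoid; (3) N contains a left zero (an element z with zn=z for all n∈N); (4) A is finite and N is a finitely generated monoid. Then the wreath product A≀B is a finitely presented 𝒲(M,N|A)-act. -/

import Mathlib

/-- The axioms for a right action of a monoid `M` on a set `A`:
`act a 1 = a` and `act a (m * n) = act (act a m) n`. -/
def IsAct {M A : Type*} [Monoid M] (act : A → M → A) : Prop :=
  (∀ a, act a 1 = a) ∧ ∀ a m n, act a (m * n) = act (act a m) n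

/-- `U ⊆ A` is a generating set for the act `(A, act)`: every element of `A`
has the form `u m` with `u ∈ U`, `m ∈ M`. -/
def Generates {M A : Type*} (act : A → M → A) (U : Set A) : Prop :=
  ∀ a : A, ∃ u ∈ U, ∃ m : M, act u m = a

/-- An act is finitely generated if it has a finite generating set. -/
def ActFG {M A : Type*} (act : A → M → A) : Prop :=
  ∃ U : Set A, U.Finite ∧ Generates act U

/-- The free `M`-act on a set `X`: the set `X × M` with action `(x, m) n = (x, m n)`. -/
def FreeAct (M : Type*) [Monoid M] (X : Type*) : X × M → M → X × M :=
  fun p m => (p.1, p.2 * m)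

/-- The congruence on the act `(A, act)` generated by a set `R ⊆ A × A`:
the smallest equivalence relation containing `R` that is compatible with the action. -/
def CongGen {M A : Type*} (act : A → M → A) (R : Set (A × A)) (a b : A) : Prop :=
  ∀ r : A → A → Prop, Equivalence r →
    (∀ x y (m : M), r x y → r (act x m) (act y m)) →
    (∀ p ∈ R, r p.1 p.2) → r a b

/-- An `M`-act `(A, act)` is finitely presented if it is defined by a presentation
`⟨X | R⟩` with `X` and `R` finite, i.e. there is a surjective `M`-equivariant map
`π : F_X → A` whose kernel is the congruence on `F_X` generated by `R`. -/
def ActFP (M : Type*) [Monoid M] {A : Type*} (act : A → M → A) : Prop :=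
  ∃ (X : Type) (_ : Finite X) (R : Set ((X × M) × (X × M))), R.Finite ∧
    ∃ π : X × M → A, Function.Surjective π ∧
      (∀ p m, π (FreeAct M X p m) = act (π p) m) ∧
      ∀ w₁ w₂ : X × M, π w₁ = π w₂ ↔ CongGen (FreeAct M X) R w₁ w₂

/-- The diagonal `M`-act: `M × M` with action `(a, b) c = (a c, b c)`. -/
def DiagAct (M : Type*) [Monoid M] : M × M → M → M × M :=
  fun p c => (p.1 * c, p.2 * c)

/-- The action of the wreath product monoid `𝒲(M, N | A)` (carried on `M × (A → N)`)
on the wreath product `A ≀ B` (carried on `A × B`): `(a, b)(m, θ) = (a m, b (a θ))`. -/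
def WreathAct {M N A B : Type*} (actA : A → M → A) (actB : B → N → B) :
    A × B → M × (A → N) → A × B :=
  fun p w => (actA p.1 w.1, actB p.2 (w.2 p.1))

/-- The multiplication of the wreath product monoid `𝒲(M, N | A)` on `M × (A → N)`:
`(m, θ)(n, φ) = (m n, θ · ᵐφ)`, where `a (θ · ᵐφ) = (a θ) ((a m) φ)`. -/
def wreathMul {M N A : Type*} [Monoid M] [Monoid N] (act : A → M → A) :
    M × (A → N) → M × (A → N) → M × (A → N) :=
  fun p q => (p.1 * q.1, fun a => p.2 a * q.2 (act a p.1))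

/-- The wreath product monoid `𝒲(M, N | A)` of `M` by `N` through the `M`-act `A`,
carried on the set `M × N^A`, with identity `(1_M, c_{1_N})`. -/
def WreathMonoid {M N A : Type*} [Monoid M] [Monoid N] (act : A → M → A)
    (hact : IsAct act) : Monoid (M × (A → N)) where
  mul := wreathMul act
  one := (1, fun _ => 1)
  mul_assoc := by
    rintro ⟨m, θ⟩ ⟨n, φ⟩ ⟨k, ψ⟩
    show wreathMul act (wreathMul act _ _) _ = wreathMul act _ (wreathMul act _ _)
    simp [wreathMul, mul_assoc, hact.2]
  one_mul := by
    rintro ⟨m, θ⟩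
    show wreathMul act (1, fun _ => 1) _ = _
    simp [wreathMul, hact.1]
  mul_one := by
    rintro ⟨m, θ⟩
    show wreathMul act _ (1, fun _ => 1) = _
    simp [wreathMul]
  npow := @npowRec _ ⟨(1, fun _ => 1)⟩ ⟨wreathMul act⟩
  npow_zero := by intros; rfl
  npow_succ := by intros; rfl

private lemma wreath_main {M N A B : Type*} [Monoid M] [Monoid N]
    (actA : A → M → A) (actB : B → N → B)
    (hA : IsAct actA) (hB : IsAct actB)
    (XA : Type) (hXAf : Finite XA) (RA : Set ((XA × M) × (XA × M))) (hRAf : RA.Finite)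
    (πA : XA × M → A) (hπAs : Function.Surjective πA)
    (hπAe : ∀ p m, πA (FreeAct M XA p m) = actA (πA p) m)
    (hπAk : ∀ w₁ w₂, πA w₁ = πA w₂ ↔ CongGen (FreeAct M XA) RA w₁ w₂)
    (Y : Type) (hYf : Finite Y) (RB : Set ((Y × N) × (Y × N))) (hRBf : RB.Finite)
    (πB : Y × N → B) (hπBs : Function.Surjective πB)
    (hπBe : ∀ p m, πB (FreeAct N Y p m) = actB (πB p) m)
    (hπBk : ∀ w₁ w₂, πB w₁ = πB w₂ ↔ CongGen (FreeAct N Y) RB w₁ w₂)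
    (G1 : Set (((XA × Y) × (M × (A → N))) × ((XA × Y) × (M × (A → N)))))
    (hG1f : G1.Finite)
    (hG1k : ∀ p ∈ G1,
      (πA (p.1.1.1, p.1.2.1), πB (p.1.1.2, p.1.2.2 (πA (p.1.1.1, 1)))) =
      (πA (p.2.1.1, p.2.2.1), πB (p.2.1.2, p.2.2.2 (πA (p.2.1.1, 1)))))
    (hNorm : ∀ r : (XA × Y) × (M × (A → N)) → (XA × Y) × (M × (A → N)) → Prop,
      Equivalence r →
      (∀ p q w, r p q → r (p.1, wreathMul actA p.2 w) (q.1, wreathMul actA q.2 w)) →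
      (∀ p ∈ G1, r p.1 p.2) →
      ∀ x y m θ, r ((x, y), (m, θ)) ((x, y), (m, fun _ => θ (πA (x, 1))))) :
    @ActFP (M × (A → N)) (WreathMonoid (N := N) actA hA) (A × B)
      (WreathAct actA actB) := by
  classical
  haveI := hXAf; haveI := hYf
  -- basic facts
  have hπA1 : ∀ x m, πA (x, m) = actA (πA (x, 1)) m := by
    intro x m; simpa [FreeAct] using hπAe (x, 1) m
  have hπAmul : ∀ x m m', πA (x, m * m') = actA (πA (x, m)) m' := fun x m m' => hπAe (x, m) m'
  have hπBmul : ∀ y n n', πB (y, n * n') = actB (πB (y, n)) n' := fun y n n' => hπBe (y, n) n'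
  have hRAk : ∀ p ∈ RA, πA p.1 = πA p.2 := fun p hp =>
    (hπAk p.1 p.2).2 (fun r hE hC hR => hR p hp)
  have hRBk : ∀ p ∈ RB, πB p.1 = πB p.2 := fun p hp =>
    (hπBk p.1 p.2).2 (fun r hE hC hR => hR p hp)
  -- the presentation
  refine ⟨XA × Y, inferInstance,
    G1 ∪ (fun q : (((XA × M) × (XA × M)) × Y) =>
        (((q.1.1.1, q.2), (q.1.1.2, fun _ => (1 : N))),
         ((q.1.2.1, q.2), (q.1.2.2, fun _ => (1 : N))))) '' (RA ×ˢ Set.univ)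
       ∪ (fun q : (((Y × N) × (Y × N)) × XA) =>
        (((q.2, q.1.1.1), ((1 : M), fun _ => q.1.1.2)),
         ((q.2, q.1.2.1), ((1 : M), fun _ => q.1.2.2)))) '' (RB ×ˢ Set.univ),
    ?_,
    (fun p => (πA (p.1.1, p.2.1), πB (p.1.2, p.2.2 (πA (p.1.1, 1))))),
    ?_, ?_, ?_⟩
  · exact (hG1f.union ((hRAf.prod Set.finite_univ).image _)).union
      ((hRBf.prod Set.finite_univ).image _)
  · -- surjectivity
    rintro ⟨a, b⟩
    obtain ⟨⟨x, m⟩, ha⟩ := hπAs a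
    obtain ⟨⟨y, n⟩, hb⟩ := hπBs b
    exact ⟨((x, y), (m, fun _ => n)), by simp [ha, hb]⟩
  · -- equivariance
    rintro ⟨⟨x, y⟩, ⟨m, θ⟩⟩ ⟨m', θ'⟩
    show (πA (x, m * m'), πB (y, θ (πA (x, 1)) * θ' (actA (πA (x, 1)) m))) = _
    refine Prod.ext ?_ ?_
    · exact hπAmul x m m'
    · show _ = actB (πB (y, θ (πA (x, 1)))) (θ' (πA (x, m)))
      rw [hπA1 x m, hπBmul]
  · -- kernel
    rintro ⟨⟨x, y⟩, ⟨m, θ⟩⟩ ⟨⟨x', y'⟩, ⟨m', θ'⟩⟩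
    constructor
    · -- hard direction
      intro h
      have ha : πA (x, m) = πA (x', m') := congrArg Prod.fst h
      have hb : πB (y, θ (πA (x, 1))) = πB (y', θ' (πA (x', 1))) := congrArg Prod.snd h
      have CM := (hπAk _ _).1 ha
      have CN := (hπBk _ _).1 hb
      intro r hEq hCompat hR
      have hC : ∀ p q w, r p q →
          r (p.1, wreathMul actA p.2 w) (q.1, wreathMul actA q.2 w) :=
        fun p q w hpq => hCompat p q w hpq
      have hRG1 : ∀ p ∈ G1, r p.1 p.2 := fun p hp => hR p (Or.inl (Or.inl hp))
      have hN := hNorm r hEq hC hRG1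
      -- RM
      have hRM : ∀ p q : XA × M, CongGen (FreeAct M XA) RA p q →
          ∀ (y₀ : Y) (n : N), r ((p.1, y₀), (p.2, fun _ => n)) ((q.1, y₀), (q.2, fun _ => n)) := by
        intro p q hpq
        refine hpq (fun p q => ∀ y₀ n, r ((p.1, y₀), (p.2, fun _ => n)) ((q.1, y₀), (q.2, fun _ => n)))
          ⟨fun p y₀ n => hEq.refl _, fun h y₀ n => hEq.symm (h y₀ n),
           fun h1 h2 y₀ n => hEq.trans (h1 y₀ n) (h2 y₀ n)⟩ ?_ ?_
        · intro p q m'' h y₀ n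
          have := hC _ _ (m'', fun _ => (1 : N)) (h y₀ n)
          simpa [wreathMul, FreeAct] using this
        · rintro ⟨⟨x1, m1⟩, ⟨x2, m2⟩⟩ hmem y₀ n
          have hg : r ((x1, y₀), (m1, fun _ => (1 : N))) ((x2, y₀), (m2, fun _ => (1 : N))) :=
            hR _ (Or.inl (Or.inr ⟨(((x1, m1), (x2, m2)), y₀), ⟨hmem, trivial⟩, rfl⟩))
          have := hC _ _ ((1 : M), fun _ => n) hg
          simpa [wreathMul] using this
      -- RN
      have hRN : ∀ p q : Y × N, CongGen (FreeAct N Y) RB p q →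
          ∀ (x₀ : XA) (m₀ : M), r ((x₀, p.1), (m₀, fun _ => p.2)) ((x₀, q.1), (m₀, fun _ => q.2)) := by
        intro p q hpq
        refine hpq (fun p q => ∀ x₀ m₀, r ((x₀, p.1), (m₀, fun _ => p.2)) ((x₀, q.1), (m₀, fun _ => q.2)))
          ⟨fun p x₀ m₀ => hEq.refl _, fun h x₀ m₀ => hEq.symm (h x₀ m₀),
           fun h1 h2 x₀ m₀ => hEq.trans (h1 x₀ m₀) (h2 x₀ m₀)⟩ ?_ ?_
        · intro p q n'' h x₀ m₀
          have := hC _ _ ((1 : M), fun _ => n'') (h x₀ m₀)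
          simpa [wreathMul, FreeAct] using this
        · rintro ⟨⟨y1, n1⟩, ⟨y2, n2⟩⟩ hmem x₀ m₀
          have hg : r ((x₀, y1), ((1 : M), fun _ => n1)) ((x₀, y2), ((1 : M), fun _ => n2)) :=
            hR _ (Or.inr ⟨(((y1, n1), (y2, n2)), x₀), ⟨hmem, trivial⟩, rfl⟩)
          have := hC _ _ (m₀, fun _ => (1 : N)) hg
          simpa [wreathMul] using this
      exact hEq.trans (hN x y m θ)
        (hEq.trans (hRM _ _ CM y (θ (πA (x, 1))))
          (hEq.trans (hRN _ _ CN x' m') (hEq.symm (hN x' y' m' θ'))))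
    · -- easy direction
      intro h
      refine h (fun p q => (πA (p.1.1, p.2.1), πB (p.1.2, p.2.2 (πA (p.1.1, 1)))) =
          (πA (q.1.1, q.2.1), πB (q.1.2, q.2.2 (πA (q.1.1, 1)))))
        ⟨fun _ => rfl, Eq.symm, Eq.trans⟩ ?_ ?_
      · rintro ⟨⟨x0, y0⟩, ⟨m0, θ0⟩⟩ ⟨⟨x1, y1⟩, ⟨m1, θ1⟩⟩ ⟨m2, θ2⟩ hpq
        show (πA (x0, m0 * m2), πB (y0, θ0 (πA (x0, 1)) * θ2 (actA (πA (x0, 1)) m0))) = _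
        have e0 : πA (x0, m0) = πA (x1, m1) := congrArg Prod.fst hpq
        have e1 : πB (y0, θ0 (πA (x0, 1))) = πB (y1, θ1 (πA (x1, 1))) := congrArg Prod.snd hpq
        refine Prod.ext ?_ ?_
        · show πA (x0, m0 * m2) = πA (x1, m1 * m2)
          rw [hπAmul, hπAmul, e0]
        · show πB (y0, θ0 (πA (x0, 1)) * θ2 (actA (πA (x0, 1)) m0)) =
            πB (y1, θ1 (πA (x1, 1)) * θ2 (actA (πA (x1, 1)) m1))
          rw [hπBmul, hπBmul, e1, ← hπA1 x0 m0, ← hπA1 x1 m1, e0]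
      · rintro p ((hp | hp) | hp)
        · exact hG1k p hp
        · obtain ⟨⟨⟨⟨x1, m1⟩, ⟨x2, m2⟩⟩, y0⟩, ⟨hmem, -⟩, rfl⟩ := hp
          have := hRAk _ hmem
          simp only at this ⊢
          refine Prod.ext ?_ ?_ <;> simp [this]
        · obtain ⟨⟨⟨⟨y1, n1⟩, ⟨y2, n2⟩⟩, x0⟩, ⟨hmem, -⟩, rfl⟩ := hp
          have := hRBk _ hmem
          simp only at this ⊢
          refine Prod.ext ?_ ?_ <;> simp [this]

/-- Let `A` be a finitely presented `M`-act and `B` a finitely presented `N`-act, and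
suppose one of the following holds: (1) `A` is a one-element act; (2) `N` is trivial;
(3) `N` contains a left zero; (4) `A` is finite and `N` is a finitely generated monoid.
Then the wreath product `A ≀ B` is a finitely presented `𝒲(M, N | A)`-act. -/
theorem stmt19 {M N A B : Type*} [Monoid M] [Monoid N] [Nonempty A] [Nonempty B]
    (actA : A → M → A) (actB : B → N → B) (hA : IsAct actA) (hB : IsAct actB)
    (hfpA : ActFP M actA) (hfpB : ActFP N actB)
    (hcond : (∀ a a' : A, a = a') ∨ (∀ n n' : N, n = n') ∨
      (∃ z : N, ∀ n : N, z * n = z) ∨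
      (Finite A ∧ ∃ S : Set N, S.Finite ∧ Submonoid.closure S = ⊤)) :
    @ActFP (M × (A → N)) (WreathMonoid (N := N) actA hA) (A × B)
      (WreathAct actA actB) := by
  classical
  obtain ⟨XA, hXAf, RA, hRAf, πA, hπAs, hπAe, hπAk⟩ := hfpA
  obtain ⟨Y, hYf, RB, hRBf, πB, hπBs, hπBe, hπBk⟩ := hfpB
  haveI := hXAf; haveI := hYf
  rcases hcond with h1 | h2 | ⟨z, hz⟩ | ⟨hAfin, S, hSf, hScl⟩
  · -- A is a one-element act
    refine wreath_main actA actB hA hB XA hXAf RA hRAf πA hπAs hπAe hπAk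
      Y hYf RB hRBf πB hπBs hπBe hπBk ∅ (Set.finite_empty) (by simp) ?_
    intro r hEq hC hG x y m θ
    have hθ : θ = fun _ => θ (πA (x, 1)) := funext fun a => congrArg θ (h1 a _)
    have h : (((x, y), (m, θ)) : (XA × Y) × (M × (A → N))) =
        ((x, y), (m, fun _ => θ (πA (x, 1)))) := by rw [← hθ]
    rw [h]; exact hEq.refl _
  · -- N is trivial
    refine wreath_main actA actB hA hB XA hXAf RA hRAf πA hπAs hπAe hπAk
      Y hYf RB hRBf πB hπBs hπBe hπBk ∅ (Set.finite_empty) (by simp) ?_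
    intro r hEq hC hG x y m θ
    have hθ : θ = fun _ => θ (πA (x, 1)) := funext fun a => h2 (θ a) _
    have h : (((x, y), (m, θ)) : (XA × Y) × (M × (A → N))) =
        ((x, y), (m, fun _ => θ (πA (x, 1)))) := by rw [← hθ]
    rw [h]; exact hEq.refl _
  · -- N has a left zero z
    refine wreath_main actA actB hA hB XA hXAf RA hRAf πA hπAs hπAe hπAk
      Y hYf RB hRBf πB hπBs hπBe hπBk
      ((fun q : XA × Y =>
        (((q.1, q.2), ((1 : M), fun _ => (1 : N))),
         ((q.1, q.2), ((1 : M), fun a => if a = πA (q.1, 1) then 1 else z)))) '' Set.univ)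
      (Set.finite_univ.image _) ?_ ?_
    · rintro p ⟨⟨x, y⟩, -, rfl⟩
      simp
    · intro r hEq hC hG x y m θ
      have hg := hG _ ⟨(x, y), trivial, rfl⟩
      have e1 : wreathMul actA ((1 : M), fun _ => (1 : N)) (m, θ) = (m, θ) := by
        simp [wreathMul, hA.1]
      have e2 : wreathMul actA ((1 : M), fun a => if a = πA (x, 1) then 1 else z) (m, θ)
          = (m, fun a => (if a = πA (x, 1) then 1 else z) * θ a) := by
        simp [wreathMul, hA.1]
      have h1 : r ((x, y), (m, θ))
          ((x, y), (m, fun a => (if a = πA (x, 1) then 1 else z) * θ a)) := by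
        have := hC _ _ (m, θ) hg
        simp only at this
        rwa [e1, e2] at this
      have h2 : r ((x, y), (m, fun _ => θ (πA (x, 1))))
          ((x, y), (m, fun a => (if a = πA (x, 1) then 1 else z) * θ (πA (x, 1)))) := by
        have := hC _ _ (m, fun _ => θ (πA (x, 1))) hg
        have e1' : wreathMul actA ((1 : M), fun _ => (1 : N)) (m, fun _ => θ (πA (x, 1)))
            = (m, fun _ => θ (πA (x, 1))) := by simp [wreathMul, hA.1]
        have e2' : wreathMul actA ((1 : M), fun a => if a = πA (x, 1) then 1 else z)
            (m, fun _ => θ (πA (x, 1)))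
            = (m, fun a => (if a = πA (x, 1) then 1 else z) * θ (πA (x, 1))) := by
          simp [wreathMul, hA.1]
        simp only at this
        rwa [e1', e2'] at this
      have key : (fun a => (if a = πA (x, 1) then 1 else z) * θ a)
          = (fun a => (if a = πA (x, 1) then 1 else z) * θ (πA (x, 1))) := by
        funext a
        by_cases hc : a = πA (x, 1)
        · subst hc; rfl
        · simp [hc, hz]
      rw [key] at h1
      exact hEq.trans h1 (hEq.symm h2)
  · -- A finite and N finitely generated
    haveI := Fintype.ofFinite A
    refine wreath_main actA actB hA hB XA hXAf RA hRAf πA hπAs hπAe hπAk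
      Y hYf RB hRBf πB hπBs hπBe hπBk
      ((fun q : (XA × Y) × A × N =>
        ((q.1, ((1 : M), fun _ => (1 : N))),
         (q.1, ((1 : M), fun a' => if a' = q.2.1 then q.2.2 else 1)))) ''
        {q | q.2.2 ∈ S ∧ q.2.1 ≠ πA (q.1.1, 1)})
      ?_ ?_ ?_
    · refine Set.Finite.image _ (Set.Finite.subset
        ((Set.finite_univ (α := XA × Y)).prod ((Set.finite_univ (α := A)).prod hSf)) ?_)
      rintro ⟨⟨x, y⟩, a, s⟩ ⟨hs, -⟩
      exact ⟨trivial, trivial, hs⟩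
    · rintro p ⟨⟨⟨x, y⟩, a, s⟩, ⟨hs, hne⟩, rfl⟩
      have : ¬ (πA (x, 1) = a) := fun h => hne h.symm
      simp [this]
    · intro r hEq hC hG x y m θ
      -- single generator step
      have hstep : ∀ (a : A) (s : N), s ∈ S → a ≠ πA (x, 1) → ∀ u : A → N,
          r ((x, y), (m, u)) ((x, y), (m, fun a' => (if a' = a then s else 1) * u a')) := by
        intro a s hs hne u
        have hg := hG _ ⟨((x, y), (a, s)), ⟨hs, hne⟩, rfl⟩
        have := hC _ _ (m, u) hg
        have e1 : wreathMul actA ((1 : M), fun _ => (1 : N)) (m, u) = (m, u) := by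
          simp [wreathMul, hA.1]
        have e2 : wreathMul actA ((1 : M), fun a' => if a' = a then s else 1) (m, u)
            = (m, fun a' => (if a' = a then s else 1) * u a') := by
          simp [wreathMul, hA.1]
        simp only at this
        rwa [e1, e2] at this
      -- multiplying by any element of the submonoid K'
      have hK : ∀ g ∈ Submonoid.closure
          {e : A → N | ∃ a s, s ∈ S ∧ a ≠ πA (x, 1) ∧ e = fun a' => if a' = a then s else 1},
          ∀ u : A → N, r ((x, y), (m, u)) ((x, y), (m, fun a => g a * u a)) := by
        intro g hg
        induction hg using Submonoid.closure_induction with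
        | mem e he =>
          obtain ⟨a, s, hs, hne, rfl⟩ := he
          exact fun u => hstep a s hs hne u
        | one =>
          intro u
          have : (fun a => (1 : A → N) a * u a) = u := by funext a; simp
          rw [this]; exact hEq.refl _
        | mul g g' hgm hgm' ih ih' =>
          intro u
          have t1 := ih' u
          have t2 := ih (fun a => g' a * u a)
          have : (fun a => (g * g') a * u a) = (fun a => g a * (fun a' => g' a' * u a') a) := by
            funext a; simp [mul_assoc]
          rw [this]
          exact hEq.trans t1 t2
      -- wrapper
      have hK' : ∀ g ∈ Submonoid.closure
          {e : A → N | ∃ a s, s ∈ S ∧ a ≠ πA (x, 1) ∧ e = fun a' => if a' = a then s else 1},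
          ∀ u v : A → N, (∀ a, g a * u a = v a) →
            r ((x, y), (m, u)) ((x, y), (m, v)) := by
        intro g hg u v hv
        have h := hK g hg u
        have e : (fun a => g a * u a) = v := funext hv
        rwa [e] at h
      -- membership: any function vanishing at πA (x,1) lies in K'
      have hmem : ∀ u : A → N, u (πA (x, 1)) = 1 → u ∈ Submonoid.closure
          {e : A → N | ∃ a s, s ∈ S ∧ a ≠ πA (x, 1) ∧ e = fun a' => if a' = a then s else 1} := by
        intro u hu
        have key : ∀ T : Finset A, πA (x, 1) ∉ T → ∀ v : A → N, (∀ a, a ∉ T → v a = 1) →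
            v ∈ Submonoid.closure
              {e : A → N | ∃ a s, s ∈ S ∧ a ≠ πA (x, 1) ∧ e = fun a' => if a' = a then s else 1} := by
          intro T
          induction T using Finset.induction_on with
          | empty =>
            intro _ v hv
            have : v = 1 := funext fun a => hv a (Finset.notMem_empty a)
            rw [this]; exact one_mem _
          | insert b T hb ih =>
            intro hax v hv
            have hbax : b ≠ πA (x, 1) := fun h => hax (by simp [← h])
            have hEb : ∀ n : N, (fun a' => if a' = b then n else 1) ∈ Submonoid.closure
                {e : A → N | ∃ a s, s ∈ S ∧ a ≠ πA (x, 1) ∧ e = fun a' => if a' = a then s else 1} := by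
              intro n
              have hn : n ∈ Submonoid.closure S := by rw [hScl]; trivial
              induction hn using Submonoid.closure_induction with
              | mem s hs => exact Submonoid.subset_closure ⟨b, s, hs, hbax, rfl⟩
              | one =>
                have : (fun a' => if a' = b then (1 : N) else 1) = 1 := by funext a'; simp
                rw [this]; exact one_mem _
              | mul n1 n2 hn1 hn2 ih1 ih2 =>
                have : (fun a' => if a' = b then n1 * n2 else 1) =
                    (fun a' => if a' = b then n1 else 1) * (fun a' => if a' = b then n2 else 1) := by
                  funext a'; by_cases hc : a' = b <;> simp [hc]
                rw [this]; exact mul_mem ih1 ih2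
            have hv' : v = (fun a' => if a' = b then v b else 1) * Function.update v b 1 := by
              funext a'
              by_cases hc : a' = b
              · subst hc; simp
              · simp [hc, Function.update_of_ne hc]
            rw [hv']
            refine mul_mem (hEb (v b)) (ih (fun h => hax (Finset.mem_insert_of_mem h)) _ ?_)
            intro a ha
            by_cases hc : a = b
            · subst hc; simp
            · rw [Function.update_of_ne hc]
              exact hv a (by simp [ha, hc])
        refine key (Finset.univ.erase (πA (x, 1))) (Finset.notMem_erase _ _) u ?_
        intro a ha
        have : a = πA (x, 1) := by simpa [Finset.mem_erase] using ha
        rw [this]; exact hu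
      -- finish
      have hg1 : (fun a => if a = πA (x, 1) then (1 : N) else θ a) ∈ Submonoid.closure
          {e : A → N | ∃ a s, s ∈ S ∧ a ≠ πA (x, 1) ∧ e = fun a' => if a' = a then s else 1} :=
        hmem _ (by simp)
      have hg2 : (fun a => if a = πA (x, 1) then (1 : N) else θ (πA (x, 1))) ∈ Submonoid.closure
          {e : A → N | ∃ a s, s ∈ S ∧ a ≠ πA (x, 1) ∧ e = fun a' => if a' = a then s else 1} :=
        hmem _ (by simp)
      have t1 : r ((x, y), (m, fun a => if a = πA (x, 1) then θ (πA (x, 1)) else 1))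
          ((x, y), (m, θ)) := by
        refine hK' _ hg1 _ _ ?_
        intro a
        by_cases hc : a = πA (x, 1)
        · subst hc; simp
        · simp [hc]
      have t2 : r ((x, y), (m, fun a => if a = πA (x, 1) then θ (πA (x, 1)) else 1))
          ((x, y), (m, fun _ => θ (πA (x, 1)))) := by
        refine hK' _ hg2 _ _ ?_
        intro a
        by_cases hc : a = πA (x, 1)
        · subst hc; simp
        · simp [hc]
      exact hEq.trans (hEq.symm t1) t2
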